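/- arXiv:1805.10921 — 7 statements merged into one kernel-verified Lean document; each statement's English description precedes it below -/
import Mathlib

section
/- (Local comparison lemma.) Fix continuous initial profiles $\nu_1, \nu_2$ and a common environment of continuous paths $B^{(1)}, \dots, B^{(n)}$. Define $L_{\nu_i}(x,n) = \max_{z \le x} \{ \nu_i(z) + L((z,1),(x,n)) \}$ and let $Z_{\nu_i}(x,n)$ be the rightmost maximizer. If $x < y$ and $Z_{\nu_1}(y,n) \le Z_{\nu_2}(x,n)$, then $L_{\nu_1}(y,n) - L_{\nu_1}(x,n) \le L_{\nu_2}(y,n) - L_{\nu_2}(x,n)$. -/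
/-- The set of passage times of staircase paths from `(x, k)` to `(y, l)` in the
Brownian last-passage percolation model with environment `B`. -/
def lppSet (B : ℕ → ℝ → ℝ) (k l : ℕ) (x y : ℝ) : Set ℝ :=
  {v | ∃ z : ℕ → ℝ, z (k - 1) = x ∧ z l = y ∧
    (∀ i : ℕ, k ≤ i → i ≤ l → z (i - 1) ≤ z i) ∧
    v = ∑ i ∈ Finset.Icc k l, (B i (z i) - B i (z (i - 1)))}

lemma lpp_quad (B : ℕ → ℝ → ℝ) (Lenv : ℕ → ℕ → ℝ → ℝ → ℝ)
    (hEnv : ∀ (k l : ℕ) (z x : ℝ), 1 ≤ k → k ≤ l → z ≤ x →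
      IsGreatest (lppSet B k l z x) (Lenv k l z x))
    (n : ℕ) (hn : 1 ≤ n) (z₁ z₂ x y : ℝ) (h12 : z₁ ≤ z₂) (h2x : z₂ ≤ x)
    (hxy : x ≤ y) :
    Lenv 1 n z₁ y + Lenv 1 n z₂ x ≤ Lenv 1 n z₁ x + Lenv 1 n z₂ y := by
  obtain ⟨z, hz0, hzn, hzm, hzv⟩ := (hEnv 1 n z₁ y le_rfl hn (h12.trans (h2x.trans hxy))).1
  obtain ⟨w, hw0, hwn, hwm, hwv⟩ := (hEnv 1 n z₂ x le_rfl hn h2x).1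
  set u : ℕ → ℝ := fun i => min (z i) (w i) with hu
  set v : ℕ → ℝ := fun i => max (z i) (w i) with hv
  have hun : (∑ i ∈ Finset.Icc 1 n, (B i (u i) - B i (u (i - 1)))) ∈ lppSet B 1 n z₁ x := by
    refine ⟨u, ?_, ?_, ?_, rfl⟩
    · simp only [hu, hz0, hw0]; exact min_eq_left h12
    · simp only [hu, hzn, hwn]; exact min_eq_right hxy
    · intro i hi hin; exact min_le_min (hzm i hi hin) (hwm i hi hin)
  have hvn : (∑ i ∈ Finset.Icc 1 n, (B i (v i) - B i (v (i - 1)))) ∈ lppSet B 1 n z₂ y := by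
    refine ⟨v, ?_, ?_, ?_, rfl⟩
    · simp only [hv, hz0, hw0]; exact max_eq_right h12
    · simp only [hv, hzn, hwn]; exact max_eq_left hxy
    · intro i hi hin; exact max_le_max (hzm i hi hin) (hwm i hi hin)
  have hle₁ : (∑ i ∈ Finset.Icc 1 n, (B i (u i) - B i (u (i - 1)))) ≤ Lenv 1 n z₁ x :=
    (hEnv 1 n z₁ x le_rfl hn (h12.trans h2x)).2 hun
  have hle₂ : (∑ i ∈ Finset.Icc 1 n, (B i (v i) - B i (v (i - 1)))) ≤ Lenv 1 n z₂ y :=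
    (hEnv 1 n z₂ y le_rfl hn (h2x.trans hxy)).2 hvn
  have hsum : (∑ i ∈ Finset.Icc 1 n, (B i (u i) - B i (u (i - 1)))) +
      (∑ i ∈ Finset.Icc 1 n, (B i (v i) - B i (v (i - 1)))) =
      (∑ i ∈ Finset.Icc 1 n, (B i (z i) - B i (z (i - 1)))) +
      (∑ i ∈ Finset.Icc 1 n, (B i (w i) - B i (w (i - 1)))) := by
    rw [← Finset.sum_add_distrib, ← Finset.sum_add_distrib]
    refine Finset.sum_congr rfl fun i _ => ?_
    have key : ∀ j : ℕ, B i (u j) + B i (v j) = B i (z j) + B i (w j) := by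
      intro j
      simp only [hu, hv]
      rcases le_total (z j) (w j) with h | h
      · rw [min_eq_left h, max_eq_right h]
      · rw [min_eq_right h, max_eq_left h]; ring
    have := key i
    have := key (i - 1)
    ring_nf
    linarith
  rw [hzv, hwv]
  linarith

/-- Local comparison lemma: with profiles `ν₁, ν₂` coupled through the same
environment, `L_{νᵢ}(x,n) = max_{z ≤ x} { νᵢ z + L((z,1),(x,n)) }` and rightmost
maximizers (exit points) `Zᵢ`, if `x < y` and `Z₁ y n ≤ Z₂ x n`, then
`L₁ y n - L₁ x n ≤ L₂ y n - L₂ x n`. -/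
theorem lpp_local_comparison (B : ℕ → ℝ → ℝ) (hB : ∀ i, Continuous (B i))
    (ν₁ ν₂ : ℝ → ℝ) (hν₁ : Continuous ν₁) (hν₂ : Continuous ν₂)
    (Lenv : ℕ → ℕ → ℝ → ℝ → ℝ)
    (hEnv : ∀ (k l : ℕ) (z x : ℝ), 1 ≤ k → k ≤ l → z ≤ x →
      IsGreatest (lppSet B k l z x) (Lenv k l z x))
    (L₁ L₂ Z₁ Z₂ : ℝ → ℕ → ℝ)
    (hL₁ : ∀ (x : ℝ) (n : ℕ), 1 ≤ n →
      IsGreatest {v | ∃ z ≤ x, v = ν₁ z + Lenv 1 n z x} (L₁ x n))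
    (hL₂ : ∀ (x : ℝ) (n : ℕ), 1 ≤ n →
      IsGreatest {v | ∃ z ≤ x, v = ν₂ z + Lenv 1 n z x} (L₂ x n))
    (hZ₁ : ∀ (x : ℝ) (n : ℕ), 1 ≤ n →
      IsGreatest {z | z ≤ x ∧ L₁ x n = ν₁ z + Lenv 1 n z x} (Z₁ x n))
    (hZ₂ : ∀ (x : ℝ) (n : ℕ), 1 ≤ n →
      IsGreatest {z | z ≤ x ∧ L₂ x n = ν₂ z + Lenv 1 n z x} (Z₂ x n))
    (n : ℕ) (hn : 1 ≤ n) (x y : ℝ) (hxy : x < y)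
    (hZ : Z₁ y n ≤ Z₂ x n) :
    L₁ y n - L₁ x n ≤ L₂ y n - L₂ x n := by
  obtain ⟨⟨hz1y, hL1y⟩, -⟩ := hZ₁ y n hn
  obtain ⟨⟨hz2x, hL2x⟩, -⟩ := hZ₂ x n hn
  have h12 : Z₁ y n ≤ Z₂ x n := hZ
  have h1x : Z₁ y n ≤ x := h12.trans hz2x
  have hL1x : ν₁ (Z₁ y n) + Lenv 1 n (Z₁ y n) x ≤ L₁ x n :=
    (hL₁ x n hn).2 ⟨Z₁ y n, h1x, rfl⟩
  have hL2y : ν₂ (Z₂ x n) + Lenv 1 n (Z₂ x n) y ≤ L₂ y n :=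
    (hL₂ y n hn).2 ⟨Z₂ x n, hz2x.trans hxy.le, rfl⟩
  have hquad := lpp_quad B Lenv hEnv n hn (Z₁ y n) (Z₂ x n) x y h12 hz2x hxy.le
  linarith
end

section
/- (Monotonicity/attractiveness of the LPP evolution.) Let $\nu_1, \nu_2$ be continuous profiles such that $\nu_1(y) - \nu_1(x) \le \nu_2(y) - \nu_2(x)$ for all $x < y$. Construct $L_{\nu_1}$ and $L_{\nu_2}$ with the same environment: $L_{\nu_i}(x,n) = \max_{z \le x} \{ \nu_i(z) + L((z,1),(x,n)) \}$ (maxima assumed attained). Then $L_{\nu_1}(y,n) - L_{\nu_1}(x,n) \le L_{\nu_2}(y,n) - L_{\nu_2}(x,n)$ for all $x < y$ and all $n \ge 1$. -/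
/-- The crossing lemma: if `z₁ ≤ z₂ ≤ x < y`, maximal paths from `z₁` to `y` and
from `z₂` to `x` must cross, and swapping the tails gives the quadrangle
inequality. -/
lemma lpp_crossing (B : ℕ → ℝ → ℝ) (Lenv : ℕ → ℕ → ℝ → ℝ → ℝ)
    (hEnv : ∀ (k l : ℕ) (z x : ℝ), 1 ≤ k → k ≤ l → z ≤ x →
      IsGreatest (lppSet B k l z x) (Lenv k l z x))
    (n : ℕ) (hn : 1 ≤ n) (z₁ z₂ x y : ℝ)
    (h12 : z₁ ≤ z₂) (h2x : z₂ ≤ x) (hxy : x < y) :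
    Lenv 1 n z₁ y + Lenv 1 n z₂ x ≤ Lenv 1 n z₁ x + Lenv 1 n z₂ y := by
  classical
  have hz₁x : z₁ ≤ x := h12.trans h2x
  have hz₂y : z₂ ≤ y := h2x.trans hxy.le
  obtain ⟨⟨ζ, hζ0, hζn, hζmono, hζval⟩, _⟩ :=
    hEnv 1 n z₁ y le_rfl hn (hz₁x.trans hxy.le)
  obtain ⟨⟨w, hw0, hwn, hwmono, hwval⟩, _⟩ := hEnv 1 n z₂ x le_rfl hn h2x
  norm_num at hζ0 hw0
  set P : ℕ → Prop := fun j => ζ j ≤ w j with hP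
  have hP0 : P 0 := by simp only [hP, hζ0, hw0]; exact h12
  set i := Nat.findGreatest P n with hidef
  have hile : i ≤ n := Nat.findGreatest_le n
  have hPi : ζ i ≤ w i := Nat.findGreatest_spec (Nat.zero_le n) hP0
  have hin : i < n := by
    rcases lt_or_eq_of_le hile with h | h
    · exact h
    · exfalso
      have := hPi
      rw [h, hζn, hwn] at this
      linarith
  have hPn : w (i + 1) < ζ (i + 1) := by
    have := Nat.findGreatest_is_greatest (Nat.lt_succ_self i) hin
    simpa only [hP, not_le] using this
  -- the swapped paths
  set ζ' : ℕ → ℝ := fun j => if j ≤ i then ζ j else w j with hζ'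
  set w' : ℕ → ℝ := fun j => if j ≤ i then w j else ζ j with hw'
  have hmemζ' : (∑ j ∈ Finset.Icc 1 n, (B j (ζ' j) - B j (ζ' (j - 1)))) ∈
      lppSet B 1 n z₁ x := by
    refine ⟨ζ', ?_, ?_, ?_, rfl⟩
    · simp only [hζ']
      norm_num
      exact hζ0
    · simp only [hζ', if_neg (by omega : ¬ n ≤ i)]
      exact hwn
    · intro j hj1 hjn
      by_cases hji : j ≤ i
      · have h' : j - 1 ≤ i := by omega
        simp only [hζ', if_pos hji, if_pos h']
        exact hζmono j hj1 hjn
      · by_cases hji' : j - 1 ≤ i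
        · have hj : j = i + 1 := by omega
          simp only [hζ', if_neg hji, if_pos hji', hj, Nat.add_sub_cancel,
            if_pos (le_refl i), if_neg (by omega : ¬ i + 1 ≤ i)]
          have h2 : w i ≤ w (i + 1) := by
            have := hwmono (i + 1) (by omega) (by omega)
            simpa using this
          linarith [hPi]
        · simp only [hζ', if_neg hji, if_neg hji']
          exact hwmono j hj1 hjn
  have hmemw' : (∑ j ∈ Finset.Icc 1 n, (B j (w' j) - B j (w' (j - 1)))) ∈
      lppSet B 1 n z₂ y := by
    refine ⟨w', ?_, ?_, ?_, rfl⟩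
    · simp only [hw']
      norm_num
      exact hw0
    · simp only [hw', if_neg (by omega : ¬ n ≤ i)]
      exact hζn
    · intro j hj1 hjn
      by_cases hji : j ≤ i
      · have h' : j - 1 ≤ i := by omega
        simp only [hw', if_pos hji, if_pos h']
        exact hwmono j hj1 hjn
      · by_cases hji' : j - 1 ≤ i
        · have hj : j = i + 1 := by omega
          simp only [hw', if_neg hji, if_pos hji', hj, Nat.add_sub_cancel,
            if_pos (le_refl i), if_neg (by omega : ¬ i + 1 ≤ i)]
          have h2 : w i ≤ w (i + 1) := by
            have := hwmono (i + 1) (by omega) (by omega)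
            simpa using this
          linarith [hPn]
        · simp only [hw', if_neg hji, if_neg hji']
          exact hζmono j hj1 hjn
  have hsum : (∑ j ∈ Finset.Icc 1 n, (B j (ζ' j) - B j (ζ' (j - 1)))) +
      (∑ j ∈ Finset.Icc 1 n, (B j (w' j) - B j (w' (j - 1)))) =
      (∑ j ∈ Finset.Icc 1 n, (B j (ζ j) - B j (ζ (j - 1)))) +
      (∑ j ∈ Finset.Icc 1 n, (B j (w j) - B j (w (j - 1)))) := by
    rw [← Finset.sum_add_distrib, ← Finset.sum_add_distrib]
    refine Finset.sum_congr rfl fun j hj => ?_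
    by_cases hji : j ≤ i
    · have h' : j - 1 ≤ i := by omega
      simp only [hζ', hw', if_pos hji, if_pos h']
    · by_cases hji' : j - 1 ≤ i
      · simp only [hζ', hw', if_neg hji, if_pos hji']; ring
      · simp only [hζ', hw', if_neg hji, if_neg hji']; ring
  have h1 := (hEnv 1 n z₁ x le_rfl hn hz₁x).2 hmemζ'
  have h2 := (hEnv 1 n z₂ y le_rfl hn hz₂y).2 hmemw'
  rw [hζval, hwval]
  linarith

/-- Monotonicity/attractiveness of the LPP evolution: if the increments of `ν₁`
are dominated by those of `ν₂`, and both profiles evolve in the same environment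
via `L_{νᵢ}(x,n) = max_{z ≤ x} { νᵢ z + L((z,1),(x,n)) }`, then the increments of
the evolved profiles remain ordered: `L₁ y n - L₁ x n ≤ L₂ y n - L₂ x n` for all
`x < y` and `n ≥ 1`. -/
theorem lpp_attractiveness (B : ℕ → ℝ → ℝ) (hB : ∀ i, Continuous (B i))
    (ν₁ ν₂ : ℝ → ℝ) (hν₁ : Continuous ν₁) (hν₂ : Continuous ν₂)
    (hinc : ∀ x y : ℝ, x < y → ν₁ y - ν₁ x ≤ ν₂ y - ν₂ x)
    (Lenv : ℕ → ℕ → ℝ → ℝ → ℝ)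
    (hEnv : ∀ (k l : ℕ) (z x : ℝ), 1 ≤ k → k ≤ l → z ≤ x →
      IsGreatest (lppSet B k l z x) (Lenv k l z x))
    (L₁ L₂ : ℝ → ℕ → ℝ)
    (hL₁ : ∀ (x : ℝ) (n : ℕ), 1 ≤ n →
      IsGreatest {v | ∃ z ≤ x, v = ν₁ z + Lenv 1 n z x} (L₁ x n))
    (hL₂ : ∀ (x : ℝ) (n : ℕ), 1 ≤ n →
      IsGreatest {v | ∃ z ≤ x, v = ν₂ z + Lenv 1 n z x} (L₂ x n)) :
    ∀ (n : ℕ), 1 ≤ n → ∀ x y : ℝ, x < y →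
      L₁ y n - L₁ x n ≤ L₂ y n - L₂ x n := by
  intro n hn x y hxy
  obtain ⟨⟨z₁, hz₁le, hz₁eq⟩, _⟩ := hL₁ y n hn
  obtain ⟨⟨z₂, hz₂le, hz₂eq⟩, _⟩ := hL₂ x n hn
  have hub₁ := (hL₁ x n hn).2
  have hub₂ := (hL₂ y n hn).2
  rcases le_or_gt z₁ z₂ with hc | hc
  · -- crossing case
    have hcross := lpp_crossing B Lenv hEnv n hn z₁ z₂ x y hc hz₂le hxy
    have h1 : ν₁ z₁ + Lenv 1 n z₁ x ≤ L₁ x n :=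
      hub₁ ⟨z₁, hc.trans hz₂le, rfl⟩
    have h2 : ν₂ z₂ + Lenv 1 n z₂ y ≤ L₂ y n :=
      hub₂ ⟨z₂, hz₂le.trans hxy.le, rfl⟩
    linarith [hz₁eq ▸ le_refl (L₁ y n), hz₂eq ▸ le_refl (L₂ x n),
      hz₁eq.ge, hz₂eq.ge, hz₁eq.le, hz₂eq.le]
  · -- exchange the exit points
    have hincr := hinc z₂ z₁ hc
    have h1 : ν₁ z₂ + Lenv 1 n z₂ x ≤ L₁ x n := hub₁ ⟨z₂, hz₂le, rfl⟩
    have h2 : ν₂ z₁ + Lenv 1 n z₁ y ≤ L₂ y n := hub₂ ⟨z₁, hz₁le, rfl⟩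
    linarith [hz₁eq.le, hz₂eq.le, hz₁eq.ge, hz₂eq.ge]
end

section
/- (Monotonicity of exit points.) With a fixed continuous profile $\nu$ and fixed continuous environment $B^{(1)},\dots,B^{(n)}$, define the exit point $Z_\nu(x,n) = \sup \{ z \le x : L_\nu(x,n) = \nu(z) + L((z,1),(x,n)) \}$, where $L_\nu(x,n) = \sup_{z \le x} \{ \nu(z) + L((z,1),(x,n)) \}$ (suprema assumed finite and attained). Then $Z_\nu(y,n)$ is non-decreasing in $y$: if $x \le y$ then $Z_\nu(x,n) \le Z_\nu(y,n)$. -/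
/-- Monotonicity of exit points: with a fixed continuous profile `ν` and fixed
continuous environment, the rightmost exit point
`Z x n = sup { z ≤ x : Lν x n = ν z + L((z,1),(x,n)) }` is non-decreasing in the
spatial argument: `x ≤ y → Z x n ≤ Z y n`. -/
theorem exitPoint_monotone (B : ℕ → ℝ → ℝ) (hB : ∀ i, Continuous (B i))
    (ν : ℝ → ℝ) (hν : Continuous ν)
    (Lenv : ℕ → ℕ → ℝ → ℝ → ℝ)
    (hEnv : ∀ (k l : ℕ) (z x : ℝ), 1 ≤ k → k ≤ l → z ≤ x →
      IsGreatest (lppSet B k l z x) (Lenv k l z x))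
    (Lν Z : ℝ → ℕ → ℝ)
    (hL : ∀ (x : ℝ) (n : ℕ), 1 ≤ n →
      IsGreatest {v | ∃ z ≤ x, v = ν z + Lenv 1 n z x} (Lν x n))
    (hZ : ∀ (x : ℝ) (n : ℕ), 1 ≤ n →
      IsGreatest {z | z ≤ x ∧ Lν x n = ν z + Lenv 1 n z x} (Z x n))
    (n : ℕ) (hn : 1 ≤ n) (x y : ℝ) (hxy : x ≤ y) :
    Z x n ≤ Z y n := by
  -- Quadrangle inequality via the min/max path swap.
  have quad : ∀ b a : ℝ, b ≤ a → a ≤ x →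
      Lenv 1 n a x + Lenv 1 n b y ≤ Lenv 1 n b x + Lenv 1 n a y := by
    intro b a hba hax
    have hby : b ≤ y := le_trans hba (le_trans hax hxy)
    have hay : a ≤ y := le_trans hax hxy
    have hbx : b ≤ x := le_trans hba hax
    obtain ⟨p, hp0, hpn, hpm, hpv⟩ := (hEnv 1 n a x le_rfl hn hax).1
    obtain ⟨q, hq0, hqn, hqm, hqv⟩ := (hEnv 1 n b y le_rfl hn hby).1
    set r : ℕ → ℝ := fun i => min (p i) (q i) with hr
    set s : ℕ → ℝ := fun i => max (p i) (q i) with hs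
    have hp0' : p 0 = a := by simpa using hp0
    have hq0' : q 0 = b := by simpa using hq0
    have hrmem : (∑ i ∈ Finset.Icc 1 n, (B i (r i) - B i (r (i - 1)))) ∈
        lppSet B 1 n b x := by
      refine ⟨r, ?_, ?_, ?_, rfl⟩
      · show min (p (1-1)) (q (1-1)) = b
        simp only [Nat.sub_self, hp0', hq0']; exact min_eq_right hba
      · simp only [hr]; rw [hpn, hqn]; exact min_eq_left hxy
      · intro i h1 h2
        exact min_le_min (hpm i h1 h2) (hqm i h1 h2)
    have hsmem : (∑ i ∈ Finset.Icc 1 n, (B i (s i) - B i (s (i - 1)))) ∈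
        lppSet B 1 n a y := by
      refine ⟨s, ?_, ?_, ?_, rfl⟩
      · show max (p (1-1)) (q (1-1)) = a
        simp only [Nat.sub_self, hp0', hq0']; exact max_eq_left hba
      · simp only [hs]; rw [hpn, hqn]; exact max_eq_right hxy
      · intro i h1 h2
        exact max_le_max (hpm i h1 h2) (hqm i h1 h2)
    have hsum : Lenv 1 n a x + Lenv 1 n b y =
        (∑ i ∈ Finset.Icc 1 n, (B i (r i) - B i (r (i - 1)))) +
        (∑ i ∈ Finset.Icc 1 n, (B i (s i) - B i (s (i - 1)))) := by
      rw [hpv, hqv, ← Finset.sum_add_distrib, ← Finset.sum_add_distrib]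
      refine Finset.sum_congr rfl fun i _ => ?_
      have h1 : ∀ j : ℕ, B i (p j) + B i (q j) = B i (r j) + B i (s j) := by
        intro j
        rcases le_total (p j) (q j) with h | h
        · simp only [hr, hs, min_eq_left h, max_eq_right h]
        · simp only [hr, hs, min_eq_right h, max_eq_left h]; ring
      have := h1 i
      have := h1 (i - 1)
      linarith
    rw [hsum]
    exact add_le_add ((hEnv 1 n b x le_rfl hn hbx).2 hrmem)
      ((hEnv 1 n a y le_rfl hn hay).2 hsmem)
  -- Main argument.
  obtain ⟨⟨hax, haeq⟩, hamax⟩ := hZ x n hn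
  obtain ⟨⟨hby, hbeq⟩, hbmax⟩ := hZ y n hn
  set a := Z x n
  set b := Z y n
  by_contra hcon
  push_neg at hcon
  have hba : b ≤ a := le_of_lt hcon
  have hq := quad b a hba hax
  have hay : a ≤ y := le_trans hax hxy
  -- ν b + L(b,x) ≤ Lν x n = ν a + L(a,x)
  have h1 : ν b + Lenv 1 n b x ≤ ν a + Lenv 1 n a x := by
    rw [← haeq]
    exact (hL x n hn).2 ⟨b, le_trans hba hax, rfl⟩
  have h2 : Lν y n ≤ ν a + Lenv 1 n a y := by
    rw [hbeq]; linarith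
  have h3 : ν a + Lenv 1 n a y ≤ Lν y n := (hL y n hn).2 ⟨a, hay, rfl⟩
  have : a ≤ b := hbmax ⟨hay, le_antisymm h2 h3⟩
  linarith
end

section
/- (Queue lengths as vertical increments of LPP.) Let $\nu(x)$ be continuous with $\nu(0)=0$, set $a(x) = \mu x - \nu(x)$ and $s^{(n)}(x) = \mu x - B^{(n)}(x)$, and define the tandem queue quantities $q^{(n)}, d^{(n)}$ recursively by $q^{(n)}(x) = \sup_{z \le x} \{ d^{(n-1)}(z,x) - s^{(n)}(z,x) \}$ and $d^{(n)}(x,y) = d^{(n-1)}(x,y) - (q^{(n)}(y) - q^{(n)}(x))$ with $d^{(0)} := a$. Then for every $n \ge 1$: $q^{(n)}(x) = L_\nu(x,n) - L_\nu(x,n-1)$ and $d^{(n)}(x) = \mu x - (L_\nu(x,n) - L_\nu(0,n))$, where $L_\nu(x,n) = \sup_{z \le x}\{ \nu(z) + L((z,1),(x,n)) \}$ and $L_\nu(x,0) := \nu(x)$. -/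
lemma lpp_extend (B : ℕ → ℝ → ℝ) (Lenv : ℕ → ℕ → ℝ → ℝ → ℝ)
    (hEnv : ∀ (k l : ℕ) (z x : ℝ), 1 ≤ k → k ≤ l → z ≤ x →
      IsGreatest (lppSet B k l z x) (Lenv k l z x))
    (m : ℕ) (hm : 1 ≤ m) (w z x : ℝ) (hwz : w ≤ z) (hzx : z ≤ x) :
    Lenv 1 m w z + (B (m+1) x - B (m+1) z) ≤ Lenv 1 (m+1) w x := by
  obtain ⟨p, hp0, hpm, hmono, hval⟩ := (hEnv 1 m w z le_rfl hm hwz).1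
  have h0 : p 0 = w := by simpa using hp0
  set p' : ℕ → ℝ := fun i => if i = m + 1 then x else p i with hp'
  have hmem : Lenv 1 m w z + (B (m+1) x - B (m+1) z) ∈ lppSet B 1 (m+1) w x := by
    refine ⟨p', ?_, ?_, ?_, ?_⟩
    · simp only [hp']
      have : (1:ℕ) - 1 = 0 := rfl
      rw [this]
      simp [(by omega : 0 ≠ m + 1), h0]
    · simp [hp']
    · intro i hi1 hi2
      rcases eq_or_lt_of_le hi2 with h | h
      · subst h
        have h1 : (m + 1) - 1 = m := by omega
        simp only [hp', h1]
        simpa [hpm] using hzx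
      · have him : i ≤ m := by omega
        have h1 : i - 1 ≠ m + 1 := by omega
        have h2 : i ≠ m + 1 := by omega
        simp only [hp', if_neg h1, if_neg h2]
        exact hmono i hi1 him
    · rw [Finset.sum_Icc_succ_top (by omega : 1 ≤ m + 1)]
      have hsum : ∑ i ∈ Finset.Icc 1 m, (B i (p' i) - B i (p' (i - 1)))
          = ∑ i ∈ Finset.Icc 1 m, (B i (p i) - B i (p (i - 1))) := by
        apply Finset.sum_congr rfl
        intro i hi
        simp only [Finset.mem_Icc] at hi
        simp only [hp', if_neg (by omega : i ≠ m + 1), if_neg (by omega : i - 1 ≠ m + 1)]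
      rw [hsum, ← hval]
      have h1 : (m + 1) - 1 = m := by omega
      simp [hp', h1, hpm, (by omega : ¬ m = m + 1)]
  exact (hEnv 1 (m+1) w x le_rfl (by omega) (hwz.trans hzx)).2 hmem

lemma lpp_restrict (B : ℕ → ℝ → ℝ) (Lenv : ℕ → ℕ → ℝ → ℝ → ℝ)
    (hEnv : ∀ (k l : ℕ) (z x : ℝ), 1 ≤ k → k ≤ l → z ≤ x →
      IsGreatest (lppSet B k l z x) (Lenv k l z x))
    (m : ℕ) (hm : 1 ≤ m) (w x : ℝ) (hwx : w ≤ x) :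
    ∃ z, w ≤ z ∧ z ≤ x ∧
      Lenv 1 (m+1) w x ≤ Lenv 1 m w z + (B (m+1) x - B (m+1) z) := by
  obtain ⟨p, hp0, hpm, hmono, hval⟩ := (hEnv 1 (m+1) w x le_rfl (by omega) hwx).1
  have h0 : p 0 = w := by simpa using hp0
  have hchain : ∀ i, i ≤ m + 1 → p 0 ≤ p i := by
    intro i
    induction i with
    | zero => intro _; exact le_rfl
    | succ j ih =>
        intro hj
        have h := hmono (j+1) (by omega) hj
        have hj1 : (j + 1) - 1 = j := by omega
        rw [hj1] at h
        exact (ih (by omega)).trans h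
  have hwpm : w ≤ p m := by rw [← h0]; exact hchain m (by omega)
  have hpmx : p m ≤ x := by
    have h := hmono (m+1) (by omega) le_rfl
    have h1 : (m + 1) - 1 = m := by omega
    rw [h1, hpm] at h
    exact h
  refine ⟨p m, hwpm, hpmx, ?_⟩
  have hmem : (∑ i ∈ Finset.Icc 1 m, (B i (p i) - B i (p (i-1)))) ∈ lppSet B 1 m w (p m) :=
    ⟨p, hp0, rfl, fun i h1 h2 => hmono i h1 (by omega), rfl⟩
  have h2 := (hEnv 1 m w (p m) le_rfl hm hwpm).2 hmem
  rw [hval, Finset.sum_Icc_succ_top (by omega : 1 ≤ m + 1)]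
  have h1 : (m + 1) - 1 = m := by omega
  rw [h1, hpm]
  linarith

lemma lpp_recursion (ν : ℝ → ℝ) (B : ℕ → ℝ → ℝ) (Lenv : ℕ → ℕ → ℝ → ℝ → ℝ)
    (hEnv : ∀ (k l : ℕ) (z x : ℝ), 1 ≤ k → k ≤ l → z ≤ x →
      IsGreatest (lppSet B k l z x) (Lenv k l z x))
    (Lν : ℝ → ℕ → ℝ) (hLν0 : ∀ x : ℝ, Lν x 0 = ν x)
    (hLν : ∀ (x : ℝ) (n : ℕ), 1 ≤ n →
      IsGreatest {v | ∃ z ≤ x, v = ν z + Lenv 1 n z x} (Lν x n))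
    (n : ℕ) (x : ℝ) :
    IsGreatest {v | ∃ z ≤ x, v = Lν z n + (B (n+1) x - B (n+1) z)} (Lν x (n+1)) := by
  cases n with
  | zero =>
    have henv11 : ∀ z : ℝ, z ≤ x → Lenv 1 1 z x = B 1 x - B 1 z := by
      intro z hz
      obtain ⟨p, hp0, hp1, _, hval⟩ := (hEnv 1 1 z x le_rfl le_rfl hz).1
      have h0 : p 0 = z := by simpa using hp0
      rw [hval, Finset.Icc_self, Finset.sum_singleton]
      have h1 : (1:ℕ) - 1 = 0 := rfl
      rw [h1, h0, hp1]
    have hset : {v : ℝ | ∃ z ≤ x, v = ν z + Lenv 1 1 z x}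
        = {v | ∃ z ≤ x, v = Lν z 0 + (B (0+1) x - B (0+1) z)} := by
      ext v
      constructor
      · rintro ⟨z, hz, rfl⟩
        exact ⟨z, hz, by rw [hLν0, henv11 z hz]⟩
      · rintro ⟨z, hz, rfl⟩
        exact ⟨z, hz, by rw [hLν0, henv11 z hz]⟩
    have h := hLν x 1 le_rfl
    rw [hset] at h
    exact h
  | succ m =>
    have hub : ∀ z : ℝ, z ≤ x →
        Lν z (m+1) + (B (m+1+1) x - B (m+1+1) z) ≤ Lν x (m+1+1) := by
      intro z hzx
      obtain ⟨w, hwz, hw⟩ := (hLν z (m+1) (by omega)).1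
      have hext := lpp_extend B Lenv hEnv (m+1) (by omega) w z x hwz hzx
      have hle : ν w + Lenv 1 (m+1+1) w x ≤ Lν x (m+1+1) :=
        (hLν x (m+1+1) (by omega)).2 ⟨w, hwz.trans hzx, rfl⟩
      rw [hw]; linarith
    constructor
    · obtain ⟨w, hwx, hw⟩ := (hLν x (m+1+1) (by omega)).1
      obtain ⟨z, hwz, hzx, hle⟩ := lpp_restrict B Lenv hEnv (m+1) (by omega) w x hwx
      refine ⟨z, hzx, ?_⟩
      have h1 : ν w + Lenv 1 (m+1) w z ≤ Lν z (m+1) :=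
        (hLν z (m+1) (by omega)).2 ⟨w, hwz, rfl⟩
      have h2 := hub z hzx
      have h3 : Lν x (m+1+1) ≤ Lν z (m+1) + (B (m+1+1) x - B (m+1+1) z) := by
        rw [hw]; linarith
      linarith
    · rintro v ⟨z, hzx, rfl⟩
      exact hub z hzx

/-- Queue lengths as vertical increments of LPP: with arrival `a x = μx - ν x`,
services `s⁽ⁿ⁾ x = μx - B n x`, and the tandem queue quantities defined
recursively by `q⁽ⁿ⁾ x = sup_{z ≤ x} { d⁽ⁿ⁻¹⁾(z,x) - s⁽ⁿ⁾(z,x) }` and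
`d⁽ⁿ⁾(x,y) = d⁽ⁿ⁻¹⁾(x,y) - (q⁽ⁿ⁾ y - q⁽ⁿ⁾ x)` with `d⁽⁰⁾ = a`, one has for every
`n ≥ 1`: `q⁽ⁿ⁾ x = Lν x n - Lν x (n-1)` and
`d⁽ⁿ⁾ x = μx - (Lν x n - Lν 0 n)`, where
`Lν x n = sup_{z ≤ x} { ν z + L((z,1),(x,n)) }` and `Lν x 0 = ν x`. -/
theorem tandemQueue_eq_lpp_increments (μ : ℝ) (ν : ℝ → ℝ) (hν : Continuous ν)
    (hν0 : ν 0 = 0) (B : ℕ → ℝ → ℝ) (hB : ∀ i, Continuous (B i))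
    (hB0 : ∀ i, B i 0 = 0)
    (Lenv : ℕ → ℕ → ℝ → ℝ → ℝ)
    (hEnv : ∀ (k l : ℕ) (z x : ℝ), 1 ≤ k → k ≤ l → z ≤ x →
      IsGreatest (lppSet B k l z x) (Lenv k l z x))
    (Lν : ℝ → ℕ → ℝ) (hLν0 : ∀ x : ℝ, Lν x 0 = ν x)
    (hLν : ∀ (x : ℝ) (n : ℕ), 1 ≤ n →
      IsGreatest {v | ∃ z ≤ x, v = ν z + Lenv 1 n z x} (Lν x n))
    (q : ℕ → ℝ → ℝ) (d : ℕ → ℝ → ℝ → ℝ)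
    (hd0 : ∀ x y : ℝ, d 0 x y = (μ * y - ν y) - (μ * x - ν x))
    (hq : ∀ (n : ℕ) (x : ℝ),
      IsGreatest {v | ∃ z ≤ x,
        v = d n z x - ((μ * x - B (n + 1) x) - (μ * z - B (n + 1) z))}
        (q (n + 1) x))
    (hd : ∀ (n : ℕ) (x y : ℝ),
      d (n + 1) x y = d n x y - (q (n + 1) y - q (n + 1) x)) :
    ∀ (n : ℕ) (x : ℝ),
      q (n + 1) x = Lν x (n + 1) - Lν x n ∧
      d (n + 1) 0 x = μ * x - (Lν x (n + 1) - Lν 0 (n + 1)) := by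
  have dsplit : ∀ (n : ℕ) (x y : ℝ), d n x y = d n 0 y - d n 0 x := by
    intro n
    induction n with
    | zero => intro x y; rw [hd0, hd0, hd0, hν0]; ring
    | succ k ih => intro x y; rw [hd, hd, hd, ih x y]; ring
  have qformula : ∀ (n : ℕ) (x : ℝ),
      (∀ t : ℝ, d n 0 t = μ * t - (Lν t n - Lν 0 n)) →
      q (n + 1) x = Lν x (n + 1) - Lν x n := by
    intro n x hdn
    have hkey := lpp_recursion ν B Lenv hEnv Lν hLν0 hLν n x
    have hg : IsGreatest {v | ∃ z ≤ x,
        v = d n z x - ((μ * x - B (n + 1) x) - (μ * z - B (n + 1) z))}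
        (Lν x (n + 1) - Lν x n) := by
      constructor
      · obtain ⟨z, hzx, hz⟩ := hkey.1
        refine ⟨z, hzx, ?_⟩
        rw [dsplit n z x, hdn x, hdn z]
        linarith
      · rintro v ⟨z, hzx, rfl⟩
        have h := hkey.2 ⟨z, hzx, rfl⟩
        rw [dsplit n z x, hdn x, hdn z]
        linarith
    exact (hq n x).unique hg
  have dfact : ∀ (n : ℕ) (t : ℝ), d n 0 t = μ * t - (Lν t n - Lν 0 n) := by
    intro n
    induction n with
    | zero => intro t; rw [hd0, hLν0, hLν0, hν0]; ring
    | succ k ih =>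
        intro t
        rw [hd, ih t, qformula k t ih, qformula k 0 ih]
        ring
  intro n x
  exact ⟨qformula n x (dfact n), dfact (n + 1) x⟩
end

section
/- (TABEP–tandem queue identification.) Let $X^{(0)} : \mathbb{R} \to \mathbb{R}$ be continuous, $B^{(n)}$ continuous with $B^{(n)}(0)=0$, and define $X^{(n)}(x) = \sup_{y \le x}(X^{(n-1)}(y) + B^{(n)}(x) - B^{(n)}(y))$ (suprema finite). Define arrival $a(x) = \mu x - X^{(0)}(x) + X^{(0)}(0)$, services $s^{(n)}(x) = \mu x - B^{(n)}(x)$, and the tandem quantities $q^{(n)}, d^{(n)}$ as usual with $d^{(n)}(0)=0$. Then for every $n \ge 1$, $d^{(n)}(x) = X^{(0)}(0) + \sum_{i=1}^n q^{(i)}(0) + \mu x - X^{(n)}(x)$ for all $x \in \mathbb{R}$. -/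
/-- Translating a set by `- c` translates its LUB. -/
lemma isLUB_sub_const {s : Set ℝ} {a c : ℝ} (h : IsLUB s a) :
    IsLUB {v | ∃ w ∈ s, v = w - c} (a - c) := by
  constructor
  · rintro v ⟨w, hw, rfl⟩
    exact sub_le_sub_right (h.1 hw) c
  · intro b hb
    have : a ≤ b + c := h.2 fun w hw => by
      have := hb ⟨w, hw, rfl⟩
      linarith
    linarith

/-- TABEP–tandem queue identification: with particles
`X⁽ⁿ⁾ x = sup_{y ≤ x} ( X⁽ⁿ⁻¹⁾ y + B n x - B n y )`, arrival
`a x = μx - X⁽⁰⁾ x + X⁽⁰⁾ 0`, services `s⁽ⁿ⁾ x = μx - B n x` and the usual tandem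
recursions (`d⁽⁰⁾ = a`, `q⁽ⁿ⁾ x = sup_{z ≤ x} { d⁽ⁿ⁻¹⁾(z,x) - s⁽ⁿ⁾(z,x) }`,
`d⁽ⁿ⁾(x,y) = d⁽ⁿ⁻¹⁾(x,y) - (q⁽ⁿ⁾ y - q⁽ⁿ⁾ x)`), one has for every `n ≥ 1`:
`d⁽ⁿ⁾ x = X⁽⁰⁾ 0 + ∑_{i=1}^n q⁽ⁱ⁾ 0 + μx - X⁽ⁿ⁾ x`. -/
theorem tabep_tandemQueue_identification (μ : ℝ)
    (X B : ℕ → ℝ → ℝ)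
    (hX0 : Continuous (X 0)) (hB : ∀ n, Continuous (B n))
    (hB0 : ∀ n, B n 0 = 0)
    (hX : ∀ (n : ℕ) (x : ℝ),
      IsLUB {v | ∃ y ≤ x, v = X n y + B (n + 1) x - B (n + 1) y} (X (n + 1) x))
    (q : ℕ → ℝ → ℝ) (d : ℕ → ℝ → ℝ → ℝ)
    (hd0 : ∀ x y : ℝ,
      d 0 x y = (μ * y - X 0 y + X 0 0) - (μ * x - X 0 x + X 0 0))
    (hq : ∀ (n : ℕ) (x : ℝ),
      IsLUB {v | ∃ z ≤ x,
        v = d n z x - ((μ * x - B (n + 1) x) - (μ * z - B (n + 1) z))}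
        (q (n + 1) x))
    (hd : ∀ (n : ℕ) (x y : ℝ),
      d (n + 1) x y = d n x y - (q (n + 1) y - q (n + 1) x)) :
    ∀ (n : ℕ) (x : ℝ),
      d (n + 1) 0 x =
        X 0 0 + (∑ i ∈ Finset.Icc 1 (n + 1), q i 0) + μ * x - X (n + 1) x := by
  -- key invariant: d n z x = μ x - μ z - X n x + X n z
  have key : ∀ n : ℕ, ∀ z x : ℝ, d n z x = μ * x - μ * z - X n x + X n z := by
    intro n
    induction n with
    | zero => intro z x; rw [hd0]; ring
    | succ n ih =>
      -- q (n+1) x = X (n+1) x - X n x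
      have hqn : ∀ x : ℝ, q (n + 1) x = X (n + 1) x - X n x := by
        intro x
        have h1 := hq n x
        have h2 := isLUB_sub_const (c := X n x) (hX n x)
        have hset : {v | ∃ z ≤ x,
            v = d n z x - ((μ * x - B (n + 1) x) - (μ * z - B (n + 1) z))} =
            {v | ∃ w ∈ {v | ∃ y ≤ x, v = X n y + B (n + 1) x - B (n + 1) y},
              v = w - X n x} := by
          ext v
          constructor
          · rintro ⟨z, hz, rfl⟩
            exact ⟨X n z + B (n + 1) x - B (n + 1) z, ⟨z, hz, rfl⟩, by
              rw [ih]; ring⟩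
          · rintro ⟨w, ⟨z, hz, rfl⟩, rfl⟩
            exact ⟨z, hz, by rw [ih]; ring⟩
        rw [hset] at h1
        exact h1.unique h2
      intro z x
      rw [hd, ih, hqn, hqn]; ring
  -- telescoping for X (n+1) 0
  have tel : ∀ n : ℕ, X (n + 1) 0 = X 0 0 + ∑ i ∈ Finset.Icc 1 (n + 1), q i 0 := by
    intro n
    induction n with
    | zero =>
      have hq1 : q 1 0 = X 1 0 - X 0 0 := by
        have h1 := hq 0 0
        have h2 := isLUB_sub_const (c := X 0 0) (hX 0 0)
        have hset : {v | ∃ z ≤ (0:ℝ),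
            v = d 0 z 0 - ((μ * 0 - B 1 0) - (μ * z - B 1 z))} =
            {v | ∃ w ∈ {v | ∃ y ≤ (0:ℝ), v = X 0 y + B 1 0 - B 1 y},
              v = w - X 0 0} := by
          ext v
          constructor
          · rintro ⟨z, hz, rfl⟩
            exact ⟨X 0 z + B 1 0 - B 1 z, ⟨z, hz, rfl⟩, by rw [key]; ring⟩
          · rintro ⟨w, ⟨z, hz, rfl⟩, rfl⟩
            exact ⟨z, hz, by rw [key]; ring⟩
        rw [hset] at h1
        exact h1.unique h2
      simp [hq1]
    | succ n ih =>
      have hqn : q (n + 2) 0 = X (n + 2) 0 - X (n + 1) 0 := by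
        have h1 := hq (n + 1) 0
        have h2 := isLUB_sub_const (c := X (n + 1) 0) (hX (n + 1) 0)
        have hset : {v | ∃ z ≤ (0:ℝ),
            v = d (n + 1) z 0 - ((μ * 0 - B (n + 2) 0) - (μ * z - B (n + 2) z))} =
            {v | ∃ w ∈ {v | ∃ y ≤ (0:ℝ),
              v = X (n + 1) y + B (n + 2) 0 - B (n + 2) y}, v = w - X (n + 1) 0} := by
          ext v
          constructor
          · rintro ⟨z, hz, rfl⟩
            exact ⟨X (n + 1) z + B (n + 2) 0 - B (n + 2) z, ⟨z, hz, rfl⟩, by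
              rw [key]; ring⟩
          · rintro ⟨w, ⟨z, hz, rfl⟩, rfl⟩
            exact ⟨z, hz, by rw [key]; ring⟩
        rw [hset] at h1
        exact h1.unique h2
      rw [Finset.sum_Icc_succ_top (by omega : 1 ≤ n + 2), hqn]
      linarith [ih]
  intro n x
  rw [key, tel]
  ring
end

section
/- Under the basic coupling with a common environment, if for some $x < y$ the exit points satisfy $Z_{\nu_1}(y,n) > Z_{\nu_2}(x,n)$, then $\big(L_{\nu_2}(y,n) - L_{\nu_2}(x,n)\big) - \big(L_{\nu_1}(y,n) - L_{\nu_1}(x,n)\big) \ge \big(\nu_2(z_1) - \nu_2(z_2)\big) - \big(\nu_1(z_1) - \nu_1(z_2)\big)$, where $z_1 = Z_{\nu_1}(y,n)$ and $z_2 = Z_{\nu_2}(x,n)$. -/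
/-- Exit point swap inequality: under the basic coupling with a common
environment, if for some `x < y` the exit points satisfy `Z₁ y n > Z₂ x n`, then
`(L₂ y n - L₂ x n) - (L₁ y n - L₁ x n) ≥ (ν₂ z₁ - ν₂ z₂) - (ν₁ z₁ - ν₁ z₂)`,
where `z₁ = Z₁ y n` and `z₂ = Z₂ x n`. -/
theorem lpp_exitPoint_swap (B : ℕ → ℝ → ℝ) (hB : ∀ i, Continuous (B i))
    (ν₁ ν₂ : ℝ → ℝ) (hν₁ : Continuous ν₁) (hν₂ : Continuous ν₂)
    (Lenv : ℕ → ℕ → ℝ → ℝ → ℝ)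
    (hEnv : ∀ (k l : ℕ) (z x : ℝ), 1 ≤ k → k ≤ l → z ≤ x →
      IsGreatest (lppSet B k l z x) (Lenv k l z x))
    (L₁ L₂ Z₁ Z₂ : ℝ → ℕ → ℝ)
    (hL₁ : ∀ (x : ℝ) (n : ℕ), 1 ≤ n →
      IsGreatest {v | ∃ z ≤ x, v = ν₁ z + Lenv 1 n z x} (L₁ x n))
    (hL₂ : ∀ (x : ℝ) (n : ℕ), 1 ≤ n →
      IsGreatest {v | ∃ z ≤ x, v = ν₂ z + Lenv 1 n z x} (L₂ x n))
    (hZ₁ : ∀ (x : ℝ) (n : ℕ), 1 ≤ n →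
      IsGreatest {z | z ≤ x ∧ L₁ x n = ν₁ z + Lenv 1 n z x} (Z₁ x n))
    (hZ₂ : ∀ (x : ℝ) (n : ℕ), 1 ≤ n →
      IsGreatest {z | z ≤ x ∧ L₂ x n = ν₂ z + Lenv 1 n z x} (Z₂ x n))
    (n : ℕ) (hn : 1 ≤ n) (x y : ℝ) (hxy : x < y)
    (hswap : Z₂ x n < Z₁ y n) :
    (ν₂ (Z₁ y n) - ν₂ (Z₂ x n)) - (ν₁ (Z₁ y n) - ν₁ (Z₂ x n)) ≤
      (L₂ y n - L₂ x n) - (L₁ y n - L₁ x n) := by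
  obtain ⟨⟨hz₁y, hL₁y⟩, -⟩ := hZ₁ y n hn
  obtain ⟨⟨hz₂x, hL₂x⟩, -⟩ := hZ₂ x n hn
  have h₂y : ν₂ (Z₁ y n) + Lenv 1 n (Z₁ y n) y ≤ L₂ y n :=
    (hL₂ y n hn).2 ⟨Z₁ y n, hz₁y, rfl⟩
  have h₁x : ν₁ (Z₂ x n) + Lenv 1 n (Z₂ x n) x ≤ L₁ x n :=
    (hL₁ x n hn).2 ⟨Z₂ x n, hz₂x, rfl⟩
  linarith
end

section
/- (Uniform sandwich bound.) Suppose $\nu, \nu_-, \nu_+$ are continuous profiles coupled through the same environment, and $C > 0, n \ge 1$ are such that (i) $Z_{\nu_-}(n+C,n) \le Z_\nu(n,n)$ and $Z_\nu(n+C,n) \le Z_{\nu_+}(n,n)$, and (ii) $\nu_-(y)-\nu_-(x) \le \nu_+(y)-\nu_+(x)$ for all $x<y$. Then $\sup_{x \in [0,C]} \big| M_\nu^{(n)}(n,n+x) - M^{(n)}(n, n+x)\big|$ — where $M^{(n)}$ is built from any profile $\nu_0$ with $\nu_-(y)-\nu_-(x) \le \nu_0(y)-\nu_0(x) \le \nu_+(y)-\nu_+(x)$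 for all $x<y$ — is bounded above by $M_{\nu_+}^{(n)}(n,n+C) - M_{\nu_-}^{(n)}(n,n+C)$. -/
/-- Crossing lemma: two staircase passage times can be rearranged into paths with
min/min and max/max endpoints, with the same total weight. -/
lemma lppSet_cross (B : ℕ → ℝ → ℝ) (k l : ℕ) {z1 x1 z2 x2 v1 v2 : ℝ}
    (h1 : v1 ∈ lppSet B k l z1 x1) (h2 : v2 ∈ lppSet B k l z2 x2) :
    ∃ w1 ∈ lppSet B k l (min z1 z2) (min x1 x2),
      ∃ w2 ∈ lppSet B k l (max z1 z2) (max x1 x2), w1 + w2 = v1 + v2 := by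
  obtain ⟨a, ha0, hal, hamono, hav⟩ := h1
  obtain ⟨b, hb0, hbl, hbmono, hbv⟩ := h2
  refine ⟨_, ⟨fun i => min (a i) (b i), by dsimp only; rw [ha0, hb0], by dsimp only; rw [hal, hbl],
      fun i hk hl => le_min ((min_le_left _ _).trans (hamono i hk hl))
        ((min_le_right _ _).trans (hbmono i hk hl)), rfl⟩,
    _, ⟨fun i => max (a i) (b i), by dsimp only; rw [ha0, hb0], by dsimp only; rw [hal, hbl],
      fun i hk hl => max_le ((hamono i hk hl).trans (le_max_left _ _))
        ((hbmono i hk hl).trans (le_max_right _ _)), rfl⟩, ?_⟩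
  rw [hav, hbv, ← Finset.sum_add_distrib, ← Finset.sum_add_distrib]
  refine Finset.sum_congr rfl fun i _ => ?_
  have key : ∀ c d : ℝ, B i (min c d) + B i (max c d) = B i c + B i d := by
    intro c d
    rcases le_total c d with h | h
    · rw [min_eq_left h, max_eq_right h]
    · rw [min_eq_right h, max_eq_left h]; ring
  have k1 := key (a i) (b i)
  have k2 := key (a (i - 1)) (b (i - 1))
  linarith

/-- Crossing superadditivity for the LPP value. -/
lemma env_cross {B : ℕ → ℝ → ℝ} {Lenv : ℕ → ℕ → ℝ → ℝ → ℝ}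
    (hEnv : ∀ (k l : ℕ) (z x : ℝ), 1 ≤ k → k ≤ l → z ≤ x →
      IsGreatest (lppSet B k l z x) (Lenv k l z x))
    {k l : ℕ} (hk : 1 ≤ k) (hkl : k ≤ l)
    {z1 x1 z2 x2 : ℝ} (h1 : z1 ≤ x1) (h2 : z2 ≤ x2) :
    Lenv k l z1 x1 + Lenv k l z2 x2 ≤
      Lenv k l (min z1 z2) (min x1 x2) + Lenv k l (max z1 z2) (max x1 x2) := by
  obtain ⟨w1, hw1, w2, hw2, hsum⟩ :=
    lppSet_cross B k l (hEnv k l z1 x1 hk hkl h1).1 (hEnv k l z2 x2 hk hkl h2).1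
  have hmin : min z1 z2 ≤ min x1 x2 :=
    le_min ((min_le_left _ _).trans h1) ((min_le_right _ _).trans h2)
  have hmax : max z1 z2 ≤ max x1 x2 :=
    max_le (h1.trans (le_max_left _ _)) (h2.trans (le_max_right _ _))
  have b1 := (hEnv k l _ _ hk hkl hmin).2 hw1
  have b2 := (hEnv k l _ _ hk hkl hmax).2 hw2
  linarith

section Abstract

variable {E : ℝ → ℝ → ℝ}

/-- Monotonicity of rightmost exit points in the spatial argument. -/
lemma exit_mono
    (hcross : ∀ z1 x1 z2 x2 : ℝ, z1 ≤ x1 → z2 ≤ x2 →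
      E z1 x1 + E z2 x2 ≤ E (min z1 z2) (min x1 x2) + E (max z1 z2) (max x1 x2))
    {f L Z : ℝ → ℝ}
    (hL : ∀ x, IsGreatest {v | ∃ z ≤ x, v = f z + E z x} (L x))
    (hZ : ∀ x, IsGreatest {z | z ≤ x ∧ L x = f z + E z x} (Z x))
    {x y : ℝ} (hxy : x ≤ y) : Z x ≤ Z y := by
  by_contra hcon
  push_neg at hcon
  obtain ⟨hzx, hLx⟩ := (hZ x).1
  obtain ⟨hzy, hLy⟩ := (hZ y).1
  have hc := hcross (Z x) x (Z y) y hzx hzy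
  rw [min_eq_right hcon.le, min_eq_left hxy, max_eq_left hcon.le,
    max_eq_right hxy] at hc
  have h1 : f (Z y) + E (Z y) x ≤ L x := (hL x).2 ⟨Z y, hcon.le.trans hzx, rfl⟩
  have h2 : f (Z x) + E (Z x) y ≤ L y := (hL y).2 ⟨Z x, hzx.trans hxy, rfl⟩
  have h3 : L y = f (Z x) + E (Z x) y := by linarith
  have := (hZ y).2 ⟨hzx.trans hxy, h3⟩
  exact absurd this (not_le.mpr hcon)

/-- Local comparison lemma via path crossing: requires a maximizer `zf` for `f` at `v`
lying to the left of a maximizer `zg` for `g` at `u`. -/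
lemma local_comp
    (hcross : ∀ z1 x1 z2 x2 : ℝ, z1 ≤ x1 → z2 ≤ x2 →
      E z1 x1 + E z2 x2 ≤ E (min z1 z2) (min x1 x2) + E (max z1 z2) (max x1 x2))
    {f g Lf Lg : ℝ → ℝ}
    (hLf : ∀ x, IsGreatest {v | ∃ z ≤ x, v = f z + E z x} (Lf x))
    (hLg : ∀ x, IsGreatest {v | ∃ z ≤ x, v = g z + E z x} (Lg x))
    {u v zf zg : ℝ} (huv : u ≤ v)
    (hzv : zf ≤ v) (hLv : Lf v = f zf + E zf v)
    (hzu : zg ≤ u) (hLu : Lg u = g zg + E zg u)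
    (hZ : zf ≤ zg) :
    Lf v - Lf u ≤ Lg v - Lg u := by
  have hc := hcross zf v zg u (hZ.trans hzu |>.trans huv) hzu
  rw [min_eq_left hZ, min_eq_right huv, max_eq_right hZ, max_eq_left huv] at hc
  have h1 : f zf + E zf u ≤ Lf u := (hLf u).2 ⟨zf, hZ.trans hzu, rfl⟩
  have h2 : g zg + E zg v ≤ Lg v := (hLg v).2 ⟨zg, hzu.trans huv, rfl⟩
  linarith

/-- Attractiveness: ordered increments imply ordered increments of profiles. -/
lemma attract
    (hcross : ∀ z1 x1 z2 x2 : ℝ, z1 ≤ x1 → z2 ≤ x2 →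
      E z1 x1 + E z2 x2 ≤ E (min z1 z2) (min x1 x2) + E (max z1 z2) (max x1 x2))
    {f g Lf Lg : ℝ → ℝ}
    (hLf : ∀ x, IsGreatest {v | ∃ z ≤ x, v = f z + E z x} (Lf x))
    (hLg : ∀ x, IsGreatest {v | ∃ z ≤ x, v = g z + E z x} (Lg x))
    (hfg : ∀ x y : ℝ, x ≤ y → g x - f x ≤ g y - f y)
    {u v : ℝ} (huv : u ≤ v) :
    Lf v - Lf u ≤ Lg v - Lg u := by
  obtain ⟨zf, hzv, hLv⟩ := (hLf v).1
  obtain ⟨zg, hzu, hLu⟩ := (hLg u).1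
  rcases le_total zf zg with h | h
  · exact local_comp hcross hLf hLg huv hzv hLv hzu hLu h
  · have h1 : g zf + E zf v ≤ Lg v := (hLg v).2 ⟨zf, hzv, rfl⟩
    have h2 : f zg + E zg u ≤ Lf u := (hLf u).2 ⟨zg, hzu, rfl⟩
    have h3 := hfg zg zf h
    linarith

end Abstract

/-- Uniform sandwich bound: suppose the profiles `ν, ν₋, ν₀, ν₊` are coupled
through the same environment, with exit point bounds
`Z₋ (n+C) n ≤ Zν n n` and `Zν (n+C) n ≤ Z₊ n n`, and with increments ordered:
`ν₋` increments `≤` `ν₀` increments `≤` `ν₊` increments (and `ν₋ ≤ ν₊`).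
Then for all `x ∈ [0, C]`,
`|Mν (n, n+x) - M₀ (n, n+x)| ≤ M₊ (n, n+C) - M₋ (n, n+C)`, where
`M_λ (u, v) := L_λ v n - L_λ u n`. -/
theorem lpp_sandwich_bound (B : ℕ → ℝ → ℝ) (hB : ∀ i, Continuous (B i))
    (ν ν₀ νm νp : ℝ → ℝ) (hν : Continuous ν) (hν₀ : Continuous ν₀)
    (hνm : Continuous νm) (hνp : Continuous νp)
    (Lenv : ℕ → ℕ → ℝ → ℝ → ℝ)
    (hEnv : ∀ (k l : ℕ) (z x : ℝ), 1 ≤ k → k ≤ l → z ≤ x →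
      IsGreatest (lppSet B k l z x) (Lenv k l z x))
    (Lν L₀ Lm Lp Zν Zm Zp : ℝ → ℕ → ℝ)
    (hLν : ∀ (x : ℝ) (k : ℕ), 1 ≤ k →
      IsGreatest {v | ∃ z ≤ x, v = ν z + Lenv 1 k z x} (Lν x k))
    (hL₀ : ∀ (x : ℝ) (k : ℕ), 1 ≤ k →
      IsGreatest {v | ∃ z ≤ x, v = ν₀ z + Lenv 1 k z x} (L₀ x k))
    (hLm : ∀ (x : ℝ) (k : ℕ), 1 ≤ k →
      IsGreatest {v | ∃ z ≤ x, v = νm z + Lenv 1 k z x} (Lm x k))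
    (hLp : ∀ (x : ℝ) (k : ℕ), 1 ≤ k →
      IsGreatest {v | ∃ z ≤ x, v = νp z + Lenv 1 k z x} (Lp x k))
    (hZν : ∀ (x : ℝ) (k : ℕ), 1 ≤ k →
      IsGreatest {z | z ≤ x ∧ Lν x k = ν z + Lenv 1 k z x} (Zν x k))
    (hZm : ∀ (x : ℝ) (k : ℕ), 1 ≤ k →
      IsGreatest {z | z ≤ x ∧ Lm x k = νm z + Lenv 1 k z x} (Zm x k))
    (hZp : ∀ (x : ℝ) (k : ℕ), 1 ≤ k →
      IsGreatest {z | z ≤ x ∧ Lp x k = νp z + Lenv 1 k z x} (Zp x k))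
    (C : ℝ) (hC : 0 < C) (n : ℕ) (hn : 1 ≤ n)
    (hexit₁ : Zm ((n : ℝ) + C) n ≤ Zν (n : ℝ) n)
    (hexit₂ : Zν ((n : ℝ) + C) n ≤ Zp (n : ℝ) n)
    (hmp : ∀ x y : ℝ, x < y → νm y - νm x ≤ νp y - νp x)
    (hm0 : ∀ x y : ℝ, x < y → νm y - νm x ≤ ν₀ y - ν₀ x)
    (h0p : ∀ x y : ℝ, x < y → ν₀ y - ν₀ x ≤ νp y - νp x) :
    ∀ x : ℝ, 0 ≤ x → x ≤ C →
      |(Lν ((n : ℝ) + x) n - Lν (n : ℝ) n) -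
          (L₀ ((n : ℝ) + x) n - L₀ (n : ℝ) n)| ≤
        (Lp ((n : ℝ) + C) n - Lp (n : ℝ) n) -
          (Lm ((n : ℝ) + C) n - Lm (n : ℝ) n) := by
  intro x hx0 hxC
  set E : ℝ → ℝ → ℝ := fun z y => Lenv 1 n z y with hE
  have hcross : ∀ z1 x1 z2 x2 : ℝ, z1 ≤ x1 → z2 ≤ x2 →
      E z1 x1 + E z2 x2 ≤ E (min z1 z2) (min x1 x2) + E (max z1 z2) (max x1 x2) :=
    fun z1 x1 z2 x2 h1 h2 => env_cross hEnv le_rfl hn h1 h2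
  have hLν' : ∀ y, IsGreatest {v | ∃ z ≤ y, v = ν z + E z y} (Lν y n) :=
    fun y => hLν y n hn
  have hL₀' : ∀ y, IsGreatest {v | ∃ z ≤ y, v = ν₀ z + E z y} (L₀ y n) :=
    fun y => hL₀ y n hn
  have hLm' : ∀ y, IsGreatest {v | ∃ z ≤ y, v = νm z + E z y} (Lm y n) :=
    fun y => hLm y n hn
  have hLp' : ∀ y, IsGreatest {v | ∃ z ≤ y, v = νp z + E z y} (Lp y n) :=
    fun y => hLp y n hn
  have hZν' : ∀ y, IsGreatest {z | z ≤ y ∧ Lν y n = ν z + E z y} (Zν y n) :=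
    fun y => hZν y n hn
  have hZm' : ∀ y, IsGreatest {z | z ≤ y ∧ Lm y n = νm z + E z y} (Zm y n) :=
    fun y => hZm y n hn
  have hZp' : ∀ y, IsGreatest {z | z ≤ y ∧ Lp y n = νp z + E z y} (Zp y n) :=
    fun y => hZp y n hn
  have mk : ∀ (f g : ℝ → ℝ), (∀ a b : ℝ, a < b → f b - f a ≤ g b - g a) →
      ∀ a b : ℝ, a ≤ b → g a - f a ≤ g b - f b := by
    intro f g h a b hab
    rcases hab.eq_or_lt with rfl | hlt
    · exact le_refl _
    · have := h a b hlt; linarith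
  have mono_sum : (n : ℝ) + x ≤ (n : ℝ) + C := by linarith
  have hun : (n : ℝ) ≤ (n : ℝ) + x := by linarith
  -- local comparison: Mν(x) ≤ Mp(x)
  have A1 : Lν ((n : ℝ) + x) n - Lν (n : ℝ) n ≤ Lp ((n : ℝ) + x) n - Lp (n : ℝ) n := by
    obtain ⟨hz1, he1⟩ := (hZν' ((n : ℝ) + x)).1
    obtain ⟨hz2, he2⟩ := (hZp' (n : ℝ)).1
    exact local_comp hcross hLν' hLp' hun hz1 he1 hz2 he2
      ((exit_mono hcross hLν' hZν' mono_sum).trans hexit₂)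
  -- local comparison: Mm(x) ≤ Mν(x)
  have A2 : Lm ((n : ℝ) + x) n - Lm (n : ℝ) n ≤ Lν ((n : ℝ) + x) n - Lν (n : ℝ) n := by
    obtain ⟨hz1, he1⟩ := (hZm' ((n : ℝ) + x)).1
    obtain ⟨hz2, he2⟩ := (hZν' (n : ℝ)).1
    exact local_comp hcross hLm' hLν' hun hz1 he1 hz2 he2
      ((exit_mono hcross hLm' hZm' mono_sum).trans hexit₁)
  -- attractiveness
  have A3 : Lm ((n : ℝ) + x) n - Lm (n : ℝ) n ≤ L₀ ((n : ℝ) + x) n - L₀ (n : ℝ) n :=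
    attract hcross hLm' hL₀' (mk νm ν₀ hm0) hun
  have A4 : L₀ ((n : ℝ) + x) n - L₀ (n : ℝ) n ≤ Lp ((n : ℝ) + x) n - Lp (n : ℝ) n :=
    attract hcross hL₀' hLp' (mk ν₀ νp h0p) hun
  have A5 : Lm ((n : ℝ) + C) n - Lm ((n : ℝ) + x) n ≤
      Lp ((n : ℝ) + C) n - Lp ((n : ℝ) + x) n :=
    attract hcross hLm' hLp' (mk νm νp hmp) mono_sum
  rw [abs_sub_le_iff]
  constructor <;> linarith
end
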